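/- arXiv:2201.11746 — 4 statements merged into one kernel-verified Lean document; each statement's English description precedes it below -/
import Mathlib

section
/- Let f(z) = Σ a_n z^n be a nonconstant power series with nonnegative coefficients, a_0 > 0, and radius of convergence R ∈ (0,∞]. Let M_f = lim_{t↑R} t f'(t)/f(t) (the limit of the mean function of the Khinchin family). Then M_f < ∞ if and only if either (R < ∞ and Σ n a_n R^n < ∞) or (R = ∞ and f is a polynomial). Moreover, in the first case M_f = (Σ n a_n R^n)/(Σ a_n R^n), and if f is a polynomial then M_f = deg(f). -/
open Filter Topology
open scoped ENNReal

lemma aux_summable_mul {a : ℕ → ℝ} (hnn : ∀ n, 0 ≤ a n) {t s : ℝ}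
    (ht : 0 ≤ t) (hts : t < s) (hs : Summable (fun n => a n * s ^ n)) :
    Summable fun n : ℕ => (n : ℝ) * a n * t ^ n := by
  have hs0 : 0 < s := lt_of_le_of_lt ht hts
  set B := ∑' n, a n * s ^ n with hB
  have hBle : ∀ n, a n * s ^ n ≤ B := fun n =>
    Summable.le_tsum hs n (fun j _ => mul_nonneg (hnn j) (pow_nonneg hs0.le j))
  have hr1 : ‖t / s‖ < 1 := by
    rw [Real.norm_eq_abs, abs_of_nonneg (div_nonneg ht hs0.le)]
    exact (div_lt_one hs0).2 hts
  have hg : Summable fun n : ℕ => B * ((n : ℝ) ^ 1 * (t / s) ^ n) :=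
    (summable_pow_mul_geometric_of_norm_lt_one 1 hr1).mul_left B
  refine Summable.of_nonneg_of_le
    (fun n => mul_nonneg (mul_nonneg (Nat.cast_nonneg n) (hnn n)) (pow_nonneg ht n)) (fun n => ?_) hg
  have key : (n : ℝ) * a n * t ^ n = ((n : ℝ) * (t / s) ^ n) * (a n * s ^ n) := by
    field_simp
    rw [mul_assoc _ ((t / s) ^ n), ← mul_pow, div_mul_cancel₀ t hs0.ne']
  rw [key, pow_one]
  rw [mul_comm B _]
  exact mul_le_mul_of_nonneg_left (hBle n)
    (mul_nonneg (Nat.cast_nonneg n) (pow_nonneg (div_nonneg ht hs0.le) n))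

lemma aux_summable_lt {a : ℕ → ℝ} {R : ℝ≥0∞} (hnn : ∀ n, 0 ≤ a n)
    (hrad : ∀ x : ℝ, 0 < x →
      (ENNReal.ofReal x < R → Summable (fun n => a n * x ^ n)) ∧
      (R < ENNReal.ofReal x → ¬ Summable (fun n => a n * x ^ n)))
    {t : ℝ} (ht : 0 ≤ t) (htR : ENNReal.ofReal t < R) :
    Summable (fun n => a n * t ^ n) ∧ Summable (fun n : ℕ => (n : ℝ) * a n * t ^ n) := by
  obtain ⟨s, hs0s, hts, hsR⟩ := ENNReal.lt_iff_exists_real_btwn.mp htR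
  
  have hs0 : 0 < s := ENNReal.ofReal_pos.1 (lt_of_le_of_lt zero_le hts)
  have hts' : t < s := (ENNReal.ofReal_lt_ofReal_iff hs0).1 hts
  have hsum := (hrad s hs0).1 hsR
  refine ⟨Summable.of_nonneg_of_le
    (fun n => mul_nonneg (hnn n) (pow_nonneg ht n)) (fun n => ?_) hsum,
    aux_summable_mul hnn ht hts' hsum⟩
  exact mul_le_mul_of_nonneg_left (pow_le_pow_left₀ ht hts'.le n) (hnn n)

lemma aux_lb {a : ℕ → ℝ} (hnn : ∀ n, 0 ≤ a n) {t : ℝ} (ht : 0 ≤ t)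
    (h0 : Summable (fun n => a n * t ^ n))
    (h1 : Summable (fun n : ℕ => (n : ℝ) * a n * t ^ n)) (K : ℕ) :
    (K : ℝ) * ((∑' n, a n * t ^ n) - ∑ n ∈ Finset.range K, a n * t ^ n)
      ≤ ∑' n : ℕ, (n : ℝ) * a n * t ^ n := by
  set g : ℕ → ℝ := fun n => if n < K then (K : ℝ) * (a n * t ^ n) else 0 with hg
  have hgz : ∀ n ∉ Finset.range K, g n = 0 := by
    intro n hn
    simp only [Finset.mem_range] at hn
    simp only [hg, if_neg hn]
  have hgsum : Summable g := summable_of_ne_finset_zero hgz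
  have hfsum : Summable (fun n => (K : ℝ) * (a n * t ^ n) - g n) :=
    (h0.mul_left _).sub hgsum
  have hgs : ∑' n, g n = (K : ℝ) * ∑ n ∈ Finset.range K, a n * t ^ n := by
    rw [tsum_eq_sum hgz, Finset.mul_sum]
    exact Finset.sum_congr rfl fun n hn => by simp [hg, Finset.mem_range.1 hn]
  have h1' : ∑' n, ((K : ℝ) * (a n * t ^ n) - g n)
      = (K : ℝ) * ((∑' n, a n * t ^ n) - ∑ n ∈ Finset.range K, a n * t ^ n) := by
    rw [Summable.tsum_sub (h0.mul_left _) hgsum, tsum_mul_left, hgs, mul_sub]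
  rw [← h1']
  refine Summable.tsum_le_tsum (fun n => ?_) hfsum h1
  by_cases hn : n < K
  · simp only [hg, if_pos hn, sub_self]
    exact mul_nonneg (mul_nonneg (Nat.cast_nonneg n) (hnn n)) (pow_nonneg ht n)
  · simp only [hg, if_neg hn, sub_zero, ← mul_assoc]
    exact mul_le_mul_of_nonneg_right
      (mul_le_mul_of_nonneg_right (Nat.cast_le.2 (Nat.le_of_not_lt hn)) (hnn n))
      (pow_nonneg ht n)

lemma aux_S0_pos {a : ℕ → ℝ} (hnn : ∀ n, 0 ≤ a n) (h0 : 0 < a 0) {t : ℝ} (ht : 0 ≤ t)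
    (hs : Summable (fun n => a n * t ^ n)) : 0 < ∑' n, a n * t ^ n := by
  have := Summable.le_tsum hs 0 (fun j _ => mul_nonneg (hnn j) (pow_nonneg ht j))
  simpa using lt_of_lt_of_le (by simpa using h0) this

lemma aux_div_ge {S0 S1 P C : ℝ} {K : ℕ} (hS0 : 0 < S0) (hlb : (K:ℝ) * (S0 - P) ≤ S1)
    (hP : 2 * P ≤ S0) (hK : 2 * C ≤ K) : C ≤ S1 / S0 := by
  rw [le_div_iff₀ hS0]
  nlinarith [mul_nonneg (Nat.cast_nonneg K : (0:ℝ) ≤ K) (by linarith : 0 ≤ S0 - 2*P),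
    mul_nonneg (by linarith : 0 ≤ (K:ℝ) - 2*C) hS0.le]

lemma aux_caseA {a : ℕ → ℝ} (hnn : ∀ n, 0 ≤ a n) (h0 : 0 < a 0) {r : ℝ} (hr : 0 < r)
    (hsum : ∀ t, 0 < t → t < r → Summable (fun n => a n * t ^ n)
      ∧ Summable (fun n : ℕ => (n:ℝ) * a n * t ^ n))
    (hns : ¬ Summable (fun n => a n * r ^ n)) :
    Tendsto (fun t => (∑' n : ℕ, (n : ℝ) * a n * t ^ n) / (∑' n : ℕ, a n * t ^ n))
      (𝓝[<] r) atTop := by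
  rw [tendsto_atTop]
  intro C
  set K : ℕ := max 1 ⌈2*C⌉₊ with hK
  have hKC : 2*C ≤ (K:ℝ) := le_trans (Nat.le_ceil _) (by exact_mod_cast Nat.le_max_right _ _)
  set c : ℝ := ∑ n ∈ Finset.range K, a n * r ^ n with hc
  have hc0 : 0 ≤ c := Finset.sum_nonneg fun n _ => mul_nonneg (hnn n) (pow_nonneg hr.le n)
  -- partial sums at r are unbounded
  have hpt : Tendsto (fun J => ∑ n ∈ Finset.range J, a n * r ^ n) atTop atTop :=
    (not_summable_iff_tendsto_nat_atTop_of_nonneg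
      (fun n => mul_nonneg (hnn n) (pow_nonneg hr.le n))).1 hns
  obtain ⟨J, hJ⟩ := (tendsto_atTop.1 hpt (2*c + 1)).exists
  have hcont : Tendsto (fun t : ℝ => ∑ n ∈ Finset.range J, a n * t ^ n) (𝓝[<] r)
      (𝓝 (∑ n ∈ Finset.range J, a n * r ^ n)) :=
    ((continuous_finset_sum _ fun i _ => (continuous_const.mul (continuous_pow i) : Continuous fun t : ℝ => a i * t ^ i)).tendsto r).mono_left
      nhdsWithin_le_nhds
  have hev1 : ∀ᶠ t in 𝓝[<] r, 2*c < ∑ n ∈ Finset.range J, a n * t ^ n :=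
    hcont.eventually (lt_mem_nhds (by linarith))
  have hev2 : ∀ᶠ t in 𝓝[<] r, t ∈ Set.Ioo 0 r :=
    Ioo_mem_nhdsLT_of_mem (by simp [hr])
  filter_upwards [hev1, hev2] with t h1 ⟨ht0, htr⟩
  obtain ⟨hs0, hs1⟩ := hsum t ht0 htr
  have hS0pos : 0 < ∑' n, a n * t ^ n := aux_S0_pos hnn h0 ht0.le hs0
  have hPle : ∑ n ∈ Finset.range K, a n * t ^ n ≤ c :=
    Finset.sum_le_sum fun n _ =>
      mul_le_mul_of_nonneg_left (pow_le_pow_left₀ ht0.le htr.le n) (hnn n)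
  have hS0lb : 2*c < ∑' n, a n * t ^ n :=
    lt_of_lt_of_le h1 (Summable.sum_le_tsum _ (fun n _ => mul_nonneg (hnn n) (pow_nonneg ht0.le n)) hs0)
  exact aux_div_ge hS0pos (aux_lb hnn ht0.le hs0 hs1 K) (by linarith) hKC

lemma aux_caseB {a : ℕ → ℝ} (hnn : ∀ n, 0 ≤ a n) (h0 : 0 < a 0) {r : ℝ} (hr : 0 < r)
    (hsum : ∀ t, 0 < t → t < r → Summable (fun n => a n * t ^ n)
      ∧ Summable (fun n : ℕ => (n:ℝ) * a n * t ^ n))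
    (hs0r : Summable (fun n => a n * r ^ n))
    (hns : ¬ Summable (fun n : ℕ => (n:ℝ) * a n * r ^ n)) :
    Tendsto (fun t => (∑' n : ℕ, (n : ℝ) * a n * t ^ n) / (∑' n : ℕ, a n * t ^ n))
      (𝓝[<] r) atTop := by
  rw [tendsto_atTop]
  intro C₀
  set C : ℝ := max C₀ 0 with hC
  set S0r : ℝ := ∑' n, a n * r ^ n with hS0r
  have hS0rpos : 0 < S0r := aux_S0_pos hnn h0 hr.le hs0r
  have hpt : Tendsto (fun J => ∑ n ∈ Finset.range J, (n:ℝ) * a n * r ^ n) atTop atTop :=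
    (not_summable_iff_tendsto_nat_atTop_of_nonneg
      (fun n => mul_nonneg (mul_nonneg (Nat.cast_nonneg n) (hnn n)) (pow_nonneg hr.le n))).1 hns
  obtain ⟨J, hJ⟩ := (tendsto_atTop.1 hpt (C * S0r + 1)).exists
  have hcont : Tendsto (fun t : ℝ => ∑ n ∈ Finset.range J, (n:ℝ) * a n * t ^ n) (𝓝[<] r)
      (𝓝 (∑ n ∈ Finset.range J, (n:ℝ) * a n * r ^ n)) :=
    ((continuous_finset_sum _ fun (i : ℕ) _ =>
      (continuous_const.mul (continuous_pow i) :
        Continuous fun t : ℝ => (i:ℝ) * a i * t ^ i)).tendsto r).mono_left nhdsWithin_le_nhds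
  have hev1 : ∀ᶠ t in 𝓝[<] r, C * S0r < ∑ n ∈ Finset.range J, (n:ℝ) * a n * t ^ n :=
    hcont.eventually (lt_mem_nhds (by linarith))
  have hev2 : ∀ᶠ t in 𝓝[<] r, t ∈ Set.Ioo 0 r :=
    Ioo_mem_nhdsLT_of_mem (by simp [hr])
  filter_upwards [hev1, hev2] with t h1 ⟨ht0, htr⟩
  obtain ⟨hs0, hs1⟩ := hsum t ht0 htr
  have hS0pos : 0 < ∑' n, a n * t ^ n := aux_S0_pos hnn h0 ht0.le hs0
  have hS0le : ∑' n, a n * t ^ n ≤ S0r :=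
    Summable.tsum_le_tsum (fun n => mul_le_mul_of_nonneg_left (pow_le_pow_left₀ ht0.le htr.le n) (hnn n))
      hs0 hs0r
  have hS1lb : C * S0r < ∑' n : ℕ, (n:ℝ) * a n * t ^ n :=
    lt_of_lt_of_le h1 (Summable.sum_le_tsum _
      (fun n _ => mul_nonneg (mul_nonneg (Nat.cast_nonneg n) (hnn n)) (pow_nonneg ht0.le n)) hs1)
  have : C ≤ (∑' n : ℕ, (n:ℝ) * a n * t ^ n) / (∑' n, a n * t ^ n) := by
    rw [le_div_iff₀ hS0pos]
    have : C * (∑' n, a n * t ^ n) ≤ C * S0r :=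
      mul_le_mul_of_nonneg_left hS0le (le_max_right _ _)
    linarith
  exact le_trans (le_max_left _ _) this

lemma aux_caseC {a : ℕ → ℝ} (hnn : ∀ n, 0 ≤ a n) (h0 : 0 < a 0)
    (hsum : ∀ t : ℝ, 0 < t → Summable (fun n => a n * t ^ n)
      ∧ Summable (fun n : ℕ => (n:ℝ) * a n * t ^ n))
    (hnp : ∀ N : ℕ, ∃ n, N < n ∧ a n ≠ 0) :
    Tendsto (fun t => (∑' n : ℕ, (n : ℝ) * a n * t ^ n) / (∑' n : ℕ, a n * t ^ n))
      atTop atTop := by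
  rw [tendsto_atTop]
  intro C
  set K : ℕ := max 1 ⌈2*C⌉₊ with hK
  have hKC : 2*C ≤ (K:ℝ) := le_trans (Nat.le_ceil _) (by exact_mod_cast Nat.le_max_right _ _)
  obtain ⟨n₀, hn₀K, hn₀⟩ := hnp K
  have ha₀ : 0 < a n₀ := lt_of_le_of_ne (hnn n₀) (Ne.symm hn₀)
  set c : ℝ := ∑ n ∈ Finset.range K, a n with hc
  have hc0 : 0 ≤ c := Finset.sum_nonneg fun n _ => hnn n
  filter_upwards [eventually_ge_atTop (max 1 (2*c/a n₀ + 1))] with t ht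
  have ht1 : (1:ℝ) ≤ t := le_trans (le_max_left _ _) ht
  have ht2 : 2*c/a n₀ + 1 ≤ t := le_trans (le_max_right _ _) ht
  have ht0 : 0 < t := lt_of_lt_of_le one_pos ht1
  obtain ⟨hs0, hs1⟩ := hsum t ht0
  have hS0pos : 0 < ∑' n, a n * t ^ n := aux_S0_pos hnn h0 ht0.le hs0
  have htK : (0:ℝ) < t ^ K := pow_pos ht0 K
  have hPle : ∑ n ∈ Finset.range K, a n * t ^ n ≤ c * t ^ K := by
    rw [hc, Finset.sum_mul]
    exact Finset.sum_le_sum fun n hn => mul_le_mul_of_nonneg_left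
      (pow_le_pow_right₀ ht1 (Nat.le_of_lt (Finset.mem_range.1 hn))) (hnn n)
  have hS0lb : a n₀ * t * t ^ K ≤ ∑' n, a n * t ^ n := by
    have h1 : a n₀ * t ^ n₀ ≤ ∑' n, a n * t ^ n :=
      Summable.le_tsum hs0 n₀ (fun j _ => mul_nonneg (hnn j) (pow_nonneg ht0.le j))
    have h2 : t ^ (K + 1) ≤ t ^ n₀ := pow_le_pow_right₀ ht1 hn₀K
    calc a n₀ * t * t ^ K = a n₀ * t ^ (K+1) := by ring
      _ ≤ a n₀ * t ^ n₀ := mul_le_mul_of_nonneg_left h2 ha₀.le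
      _ ≤ _ := h1
  have h2c : 2 * c ≤ a n₀ * t := by
    have := mul_le_mul_of_nonneg_left ht2 ha₀.le
    rw [mul_add, mul_one, mul_div_cancel₀ _ (ne_of_gt ha₀)] at this
    linarith
  have hP2 : 2 * ∑ n ∈ Finset.range K, a n * t ^ n ≤ ∑' n, a n * t ^ n := by
    calc 2 * ∑ n ∈ Finset.range K, a n * t ^ n ≤ 2 * (c * t ^ K) := by linarith
      _ ≤ (a n₀ * t) * t ^ K := by nlinarith
      _ ≤ _ := hS0lb
  exact aux_div_ge hS0pos (aux_lb hnn ht0.le hs0 hs1 K) hP2 hKC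

lemma aux_poly {a : ℕ → ℝ} (N : ℕ) (haN : a N ≠ 0) (htop : ∀ n, N < n → a n = 0) :
    Tendsto (fun t => (∑' n : ℕ, (n : ℝ) * a n * t ^ n) / (∑' n : ℕ, a n * t ^ n))
      atTop (𝓝 (N : ℝ)) := by
  set g : ℝ → ℝ := fun u => ∑ n ∈ Finset.range (N+1), (n:ℝ) * a n * u ^ (N - n) with hg
  set h : ℝ → ℝ := fun u => ∑ n ∈ Finset.range (N+1), a n * u ^ (N - n) with hh
  have hg0 : g 0 = (N:ℝ) * a N := by
    rw [hg]
    simp only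
    rw [Finset.sum_eq_single N]
    · simp
    · intro n hn hne
      have : N - n ≠ 0 := Nat.sub_ne_zero_of_lt
        (lt_of_le_of_ne (Nat.lt_succ_iff.1 (Finset.mem_range.1 hn)) hne)
      rw [zero_pow this, mul_zero]
    · simp
  have hh0 : h 0 = a N := by
    rw [hh]
    simp only
    rw [Finset.sum_eq_single N]
    · simp
    · intro n hn hne
      have : N - n ≠ 0 := Nat.sub_ne_zero_of_lt
        (lt_of_le_of_ne (Nat.lt_succ_iff.1 (Finset.mem_range.1 hn)) hne)
      rw [zero_pow this, mul_zero]
    · simp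
  have hgc : Continuous g := continuous_finset_sum _ fun i _ =>
    continuous_const.mul (continuous_pow _)
  have hhc : Continuous h := continuous_finset_sum _ fun i _ =>
    continuous_const.mul (continuous_pow _)
  have hdiv : Tendsto (fun u => g u / h u) (𝓝 0) (𝓝 ((N:ℝ))) := by
    have := (hgc.tendsto 0).div (hhc.tendsto 0) (by rw [hh0]; exact haN)
    rw [hg0, hh0, mul_div_assoc, div_self haN, mul_one] at this
    exact this
  have hcomp : Tendsto (fun t : ℝ => g t⁻¹ / h t⁻¹) atTop (𝓝 (N:ℝ)) :=
    hdiv.comp tendsto_inv_atTop_zero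
  refine hcomp.congr' ?_
  filter_upwards [eventually_gt_atTop (0:ℝ)] with t ht0
  have htne : t ≠ 0 := ne_of_gt ht0
  have hs1 : ∑' n : ℕ, (n:ℝ) * a n * t ^ n
      = ∑ n ∈ Finset.range (N+1), (n:ℝ) * a n * t ^ n :=
    tsum_eq_sum (fun n hn => by
      rw [htop n (by simp only [Finset.mem_range] at hn; omega), mul_zero, zero_mul])
  have hs0 : ∑' n : ℕ, a n * t ^ n = ∑ n ∈ Finset.range (N+1), a n * t ^ n :=
    tsum_eq_sum (fun n hn => by
      rw [htop n (by simp only [Finset.mem_range] at hn; omega), zero_mul])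
  have key : ∀ n ∈ Finset.range (N+1), t ^ n = t ^ N * (t⁻¹) ^ (N - n) := by
    intro n hn
    have hnN : n ≤ N := Nat.lt_succ_iff.1 (Finset.mem_range.1 hn)
    rw [inv_pow, eq_comm, mul_inv_eq_iff_eq_mul₀ (pow_ne_zero _ htne), ← pow_add]
    congr 1
    omega
  have e1 : ∑ n ∈ Finset.range (N+1), (n:ℝ) * a n * t ^ n = t ^ N * g t⁻¹ := by
    rw [hg]
    simp only
    rw [Finset.mul_sum]
    exact Finset.sum_congr rfl fun n hn => by rw [key n hn]; ring
  have e0 : ∑ n ∈ Finset.range (N+1), a n * t ^ n = t ^ N * h t⁻¹ := by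
    rw [hh]
    simp only
    rw [Finset.mul_sum]
    exact Finset.sum_congr rfl fun n hn => by rw [key n hn]; ring
  rw [hs1, hs0, e1, e0, mul_div_mul_left _ _ (pow_ne_zero N htne)]

lemma aux_summable_S0r {a : ℕ → ℝ} (hnn : ∀ n, 0 ≤ a n) {r : ℝ} (hr : 0 < r)
    (hs1r : Summable (fun n : ℕ => (n:ℝ) * a n * r ^ n)) :
    Summable (fun n => a n * r ^ n) := by
  have hg : Summable (fun n : ℕ => (n:ℝ) * a n * r ^ n + (if n = 0 then a 0 else 0)) :=
    hs1r.add (summable_of_ne_finset_zero (s := {0}) (fun n hn => by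
      simp only [Finset.mem_singleton] at hn; simp [hn]))
  refine Summable.of_nonneg_of_le (fun n => mul_nonneg (hnn n) (pow_nonneg hr.le n))
    (fun n => ?_) hg
  rcases Nat.eq_zero_or_pos n with h | h
  · simp [h]
  · have h1 : (1:ℝ) ≤ (n:ℝ) := by exact_mod_cast h
    have : a n * r ^ n ≤ (n:ℝ) * a n * r ^ n := by
      nlinarith [mul_nonneg (hnn n) (pow_nonneg hr.le n)]
    simp only [if_neg (Nat.pos_iff_ne_zero.1 h)]
    linarith

lemma aux_case2 {a : ℕ → ℝ} (hnn : ∀ n, 0 ≤ a n) (h0 : 0 < a 0) {r : ℝ} (hr : 0 < r)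
    (hs1r : Summable (fun n : ℕ => (n:ℝ) * a n * r ^ n)) :
    Tendsto (fun t => (∑' n : ℕ, (n : ℝ) * a n * t ^ n) / (∑' n : ℕ, a n * t ^ n))
      (𝓝[<] r)
      (𝓝 ((∑' n : ℕ, (n : ℝ) * a n * r ^ n) / (∑' n : ℕ, a n * r ^ n))) := by
  have hs0r : Summable (fun n => a n * r ^ n) := aux_summable_S0r hnn hr hs1r
  have hbdd : ∀ᶠ t in 𝓝[<] r, t ∈ Set.Ioo 0 r := Ioo_mem_nhdsLT_of_mem (by simp [hr])
  have h1 : Tendsto (fun t => ∑' n : ℕ, (n : ℝ) * a n * t ^ n) (𝓝[<] r)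
      (𝓝 (∑' n : ℕ, (n : ℝ) * a n * r ^ n)) := by
    refine tendsto_tsum_of_dominated_convergence hs1r (fun k => ?_) ?_
    · exact ((continuous_const.mul (continuous_pow k) :
        Continuous fun t : ℝ => (k:ℝ) * a k * t ^ k).tendsto r).mono_left nhdsWithin_le_nhds
    · filter_upwards [hbdd] with t ⟨ht0, htr⟩ k
      rw [Real.norm_eq_abs, abs_of_nonneg
        (mul_nonneg (mul_nonneg (Nat.cast_nonneg k) (hnn k)) (pow_nonneg ht0.le k))]
      exact mul_le_mul_of_nonneg_left (pow_le_pow_left₀ ht0.le htr.le k)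
        (mul_nonneg (Nat.cast_nonneg k) (hnn k))
  have h2 : Tendsto (fun t => ∑' n : ℕ, a n * t ^ n) (𝓝[<] r)
      (𝓝 (∑' n : ℕ, a n * r ^ n)) := by
    refine tendsto_tsum_of_dominated_convergence hs0r (fun k => ?_) ?_
    · exact ((continuous_const.mul (continuous_pow k) :
        Continuous fun t : ℝ => a k * t ^ k).tendsto r).mono_left nhdsWithin_le_nhds
    · filter_upwards [hbdd] with t ⟨ht0, htr⟩ k
      rw [Real.norm_eq_abs, abs_of_nonneg (mul_nonneg (hnn k) (pow_nonneg ht0.le k))]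
      exact mul_le_mul_of_nonneg_left (pow_le_pow_left₀ ht0.le htr.le k) (hnn k)
  exact h1.div h2 (ne_of_gt (aux_S0_pos hnn h0 hr.le hs0r))

lemma aux_not_both {f : ℝ → ℝ} {l : Filter ℝ} [l.NeBot] {M : ℝ}
    (h1 : Tendsto f l atTop) (h2 : Tendsto f l (𝓝 M)) : False := by
  obtain ⟨t, ht1, ht2⟩ := ((tendsto_atTop.1 h1 (M+1)).and
    (h2.eventually (gt_mem_nhds (lt_add_one M)))).exists
  linarith

/-- Characterization of the finiteness of `M_f = lim_{t ↑ R} m(t)`, the limit of the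
mean function of the Khinchin family of `f ∈ K`: `M_f < ∞` iff (`R < ∞` and
`Σ n aₙ Rⁿ < ∞`) or (`R = ∞` and `f` is a polynomial); in the first case
`M_f = (Σ n aₙ Rⁿ)/(Σ aₙ Rⁿ)`, and for a polynomial of degree `N`, `M_f = N`. -/
theorem stmt_2 (a : ℕ → ℝ) (R : ℝ≥0∞) (hR : 0 < R)
    (hnn : ∀ n, 0 ≤ a n) (h0 : 0 < a 0) (hnc : ∃ n, 1 ≤ n ∧ a n ≠ 0)
    (hrad : ∀ x : ℝ, 0 < x →
      (ENNReal.ofReal x < R → Summable (fun n => a n * x ^ n)) ∧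
      (R < ENNReal.ofReal x → ¬ Summable (fun n => a n * x ^ n)))
    (m : ℝ → ℝ)
    (hm : ∀ t, m t = (∑' n : ℕ, (n : ℝ) * a n * t ^ n) / (∑' n : ℕ, a n * t ^ n))
    (l : Filter ℝ)
    (hl : l = if R = ⊤ then Filter.atTop else nhdsWithin R.toReal (Set.Iio R.toReal)) :
    ((∃ M : ℝ, Filter.Tendsto m l (𝓝 M)) ↔
      ((R ≠ ⊤ ∧ Summable (fun n : ℕ => (n : ℝ) * a n * R.toReal ^ n)) ∨
       (R = ⊤ ∧ ∃ N : ℕ, ∀ n, N < n → a n = 0)))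
    ∧ (R ≠ ⊤ → Summable (fun n : ℕ => (n : ℝ) * a n * R.toReal ^ n) →
        Filter.Tendsto m l
          (𝓝 ((∑' n : ℕ, (n : ℝ) * a n * R.toReal ^ n) / (∑' n : ℕ, a n * R.toReal ^ n))))
    ∧ (∀ N : ℕ, a N ≠ 0 → (∀ n, N < n → a n = 0) → Filter.Tendsto m l (𝓝 (N : ℝ))) := by
  classical
  have hF : m = fun t => (∑' n : ℕ, (n : ℝ) * a n * t ^ n) / (∑' n : ℕ, a n * t ^ n) :=
    funext hm
  -- if a is a polynomial then R = ⊤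
  have hpolyTop : ∀ N : ℕ, (∀ n, N < n → a n = 0) → R = ⊤ := by
    intro N htop
    by_contra hT
    have hr : 0 < R.toReal := ENNReal.toReal_pos hR.ne' hT
    set x : ℝ := R.toReal + 1 with hx
    have hx0 : 0 < x := by linarith
    have hlt : R < ENNReal.ofReal x := by
      conv_lhs => rw [← ENNReal.ofReal_toReal hT]
      exact (ENNReal.ofReal_lt_ofReal_iff hx0).2 (by linarith)
    have hsummable : Summable (fun n => a n * x ^ n) :=
      summable_of_ne_finset_zero (s := Finset.range (N+1)) (fun n hn => by
        rw [htop n (by simp only [Finset.mem_range] at hn; omega), zero_mul])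
    exact (hrad x hx0).2 hlt hsummable
  -- part 2
  have key2 : R ≠ ⊤ → Summable (fun n : ℕ => (n : ℝ) * a n * R.toReal ^ n) →
      Filter.Tendsto m l
        (𝓝 ((∑' n : ℕ, (n : ℝ) * a n * R.toReal ^ n) / (∑' n : ℕ, a n * R.toReal ^ n))) := by
    intro hT hs1r
    have hr : 0 < R.toReal := ENNReal.toReal_pos hR.ne' hT
    have hl' : l = 𝓝[<] R.toReal := by rw [hl, if_neg hT]
    rw [hF, hl']
    exact aux_case2 hnn h0 hr hs1r
  -- part 3
  have key3 : ∀ N : ℕ, a N ≠ 0 → (∀ n, N < n → a n = 0) →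
      Filter.Tendsto m l (𝓝 (N : ℝ)) := by
    intro N haN htop
    have hT : R = ⊤ := hpolyTop N htop
    have hl' : l = atTop := by rw [hl, if_pos hT]
    rw [hF, hl']
    exact aux_poly N haN htop
  refine ⟨⟨?_, ?_⟩, key2, key3⟩
  · -- forward direction
    rintro ⟨M, hM⟩
    by_contra hcon
    push_neg at hcon
    obtain ⟨hc1, hc2⟩ := hcon
    by_cases hT : R = ⊤
    · -- not a polynomial: m → ⊤
      have hnp : ∀ N : ℕ, ∃ n, N < n ∧ a n ≠ 0 := by
        have := hc2 hT
        exact this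
      have hsum : ∀ t : ℝ, 0 < t → Summable (fun n => a n * t ^ n)
          ∧ Summable (fun n : ℕ => (n:ℝ) * a n * t ^ n) := fun t ht =>
        aux_summable_lt hnn hrad ht.le (by rw [hT]; exact ENNReal.ofReal_lt_top)
      have hl' : l = atTop := by rw [hl, if_pos hT]
      rw [hF, hl'] at hM
      exact aux_not_both (aux_caseC hnn h0 hsum hnp) hM
    · have hns1 : ¬ Summable (fun n : ℕ => (n : ℝ) * a n * R.toReal ^ n) := hc1 hT
      have hr : 0 < R.toReal := ENNReal.toReal_pos hR.ne' hT
      have hRr : ENNReal.ofReal R.toReal = R := ENNReal.ofReal_toReal hT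
      have hsum : ∀ t, 0 < t → t < R.toReal → Summable (fun n => a n * t ^ n)
          ∧ Summable (fun n : ℕ => (n:ℝ) * a n * t ^ n) := by
        intro t ht0 htr
        exact aux_summable_lt hnn hrad ht0.le
          (by rw [← hRr]; exact (ENNReal.ofReal_lt_ofReal_iff hr).2 htr)
      have hl' : l = 𝓝[<] R.toReal := by rw [hl, if_neg hT]
      rw [hF, hl'] at hM
      by_cases hs0r : Summable (fun n => a n * R.toReal ^ n)
      · exact aux_not_both (aux_caseB hnn h0 hr hsum hs0r hns1) hM
      · exact aux_not_both (aux_caseA hnn h0 hr hsum hs0r) hM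
  · -- backward direction
    rintro (⟨hT, hs⟩ | ⟨hT, N, hN⟩)
    · exact ⟨_, key2 hT hs⟩
    · set N' : ℕ := Nat.findGreatest (fun n => a n ≠ 0) N with hN'
      have haN' : a N' ≠ 0 := Nat.findGreatest_spec (P := fun n => a n ≠ 0) (Nat.zero_le N) h0.ne'
      have htop' : ∀ n, N' < n → a n = 0 := by
        intro n hn
        by_cases hnN : n ≤ N
        · exact not_not.1 (Nat.findGreatest_is_greatest hn hnN)
        · exact hN n (Nat.lt_of_not_le hnN)
      exact ⟨N', key3 N' haN' htop'⟩
end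

section
/- Let ψ(z) = Σ b_j z^j be a nonconstant power series with nonnegative coefficients, b_0 > 0, b_1 > 0, and radius of convergence R > 0. Then for each θ_0 ∈ (0,π) there exist c > 0 and r > 0 such that |ψ(t e^{iθ})|/ψ(t) ≤ e^{−ct} whenever 0 < t ≤ r and θ_0 ≤ |θ| ≤ π. -/
open Filter Topology

set_option maxHeartbeats 1000000 in
/-- If `ψ ∈ K` has `b₁ = ψ'(0) > 0`, then for each `θ₀ ∈ (0, π)` there are
`c > 0` and `r > 0` such that `|ψ(t e^{iθ})| ≤ e^{-ct} ψ(t)` whenever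
`0 < t ≤ r` and `θ₀ ≤ |θ| ≤ π`. -/
theorem stmt_9 (b : ℕ → ℝ) (R : ℝ) (hR : 0 < R)
    (hnn : ∀ j, 0 ≤ b j) (h0 : 0 < b 0) (h1 : 0 < b 1)
    (hnc : ∃ j, 1 ≤ j ∧ b j ≠ 0)
    (hsumC : ∀ z : ℂ, ‖z‖ < R → Summable (fun j => (b j : ℂ) * z ^ j))
    (ψC : ℂ → ℂ) (hψC : ∀ z, ψC z = ∑' j, (b j : ℂ) * z ^ j)
    (ψ : ℝ → ℝ) (hψ : ∀ x, ψ x = ∑' j, b j * x ^ j) :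
    ∀ θ₀ : ℝ, 0 < θ₀ → θ₀ < Real.pi →
      ∃ c > 0, ∃ r, 0 < r ∧ r < R ∧
        ∀ t θ : ℝ, 0 < t → t ≤ r → θ₀ ≤ |θ| → |θ| ≤ Real.pi →
          ‖ψC ((t : ℂ) * Complex.exp (Complex.I * θ))‖ ≤ Real.exp (-c * t) * ψ t := by
  intro θ₀ hθ₀ hθ₀π
  set r : ℝ := min (R / 2) 1 with hrdef
  have hr0 : 0 < r := lt_min (by linarith) one_pos
  have hrR : r < R := lt_of_le_of_lt (min_le_left _ _) (by linarith)
  have hr1 : r ≤ 1 := min_le_right _ _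
  -- real summability
  have hsumR : ∀ x : ℝ, |x| < R → Summable (fun j => b j * x ^ j) := by
    intro x hx
    have h : Summable (fun j => ((b j * x ^ j : ℝ) : ℂ)) := by
      have := hsumC (x : ℂ) (by simpa using hx)
      convert this using 2 with j
      push_cast
      ring
    exact Complex.summable_ofReal.mp h
  have hsr : Summable (fun j => b j * r ^ j) :=
    hsumR r (by rwa [abs_of_pos hr0])
  -- positivity of ψ r
  have hψr_pos : 0 < ψ r := by
    rw [hψ]
    have h0le : b 0 * r ^ 0 ≤ ∑' j, b j * r ^ j :=
      Summable.le_tsum hsr 0 (fun j _ => mul_nonneg (hnn j) (pow_nonneg hr0.le j))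
    simpa using lt_of_lt_of_le (by simpa using h0) h0le
  set s : ℝ := 1 - Real.cos θ₀ with hsdef
  have hs : 0 < s := by
    have : Real.cos θ₀ < Real.cos 0 :=
      Real.cos_lt_cos_of_nonneg_of_le_pi le_rfl hθ₀π.le hθ₀
    simp only [Real.cos_zero] at this
    simp [hsdef]; linarith
  set δ : ℝ := b 0 * b 1 * s / (b 0 + b 1) with hδdef
  have hδ : 0 < δ := by
    apply div_pos (by positivity) (by linarith)
  refine ⟨δ / ψ r, div_pos hδ hψr_pos, r, hr0, hrR, ?_⟩
  set c : ℝ := δ / ψ r with hcdef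
  have hc_pos : 0 < c := div_pos hδ hψr_pos
  have hc_eq : c * ψ r = δ := div_mul_cancel₀ δ (ne_of_gt hψr_pos)
  intro t θ ht0 htr hθa hθb
  have htR : t < R := lt_of_le_of_lt htr hrR
  have ht1 : t ≤ 1 := le_trans htr hr1
  set z : ℂ := (t : ℂ) * Complex.exp (Complex.I * θ) with hzdef
  have hz : ‖z‖ = t := by
    rw [hzdef, norm_mul, Complex.norm_exp]
    simp [abs_of_pos ht0]
  -- summabilities
  have hst : Summable (fun j => b j * t ^ j) :=
    hsumR t (by rwa [abs_of_pos ht0])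
  have hstC : Summable (fun j => (b j : ℂ) * z ^ j) :=
    hsumC z (by rwa [hz])
  have htail : Summable (fun j => b (j + 2) * t ^ (j + 2)) :=
    (summable_nat_add_iff 2).2 hst
  have htailC : Summable (fun j => (b (j + 2) : ℂ) * z ^ (j + 2)) :=
    (summable_nat_add_iff 2).2 hstC
  -- splitting
  have hsplit : ψC z = ((b 0 : ℂ) + (b 1 : ℂ) * z) + ∑' j, (b (j + 2) : ℂ) * z ^ (j + 2) := by
    rw [hψC, ← Summable.sum_add_tsum_nat_add 2 hstC]
    simp [Finset.sum_range_succ]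
  have hψt : ψ t = (b 0 + b 1 * t) + ∑' j, b (j + 2) * t ^ (j + 2) := by
    rw [hψ, ← Summable.sum_add_tsum_nat_add 2 hst]
    simp [Finset.sum_range_succ]
  -- tail bound
  have htb : ‖∑' j, (b (j + 2) : ℂ) * z ^ (j + 2)‖ ≤ ∑' j, b (j + 2) * t ^ (j + 2) := by
    have heq : ∀ j : ℕ, ‖(b (j + 2) : ℂ) * z ^ (j + 2)‖ = b (j + 2) * t ^ (j + 2) := by
      intro j
      rw [norm_mul, norm_pow, hz, Complex.norm_real, Real.norm_of_nonneg (hnn _)]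
    calc ‖∑' j, (b (j + 2) : ℂ) * z ^ (j + 2)‖
        ≤ ∑' j, ‖(b (j + 2) : ℂ) * z ^ (j + 2)‖ :=
          norm_tsum_le_tsum_norm (htail.congr fun j => (heq j).symm)
      _ = ∑' j, b (j + 2) * t ^ (j + 2) := tsum_congr heq
  -- head bound
  set A : ℝ := ‖(b 0 : ℂ) + (b 1 : ℂ) * z‖ with hAdef
  have hwre : (b 0 : ℂ) + (b 1 : ℂ) * z =
      ((b 0 + b 1 * t * Real.cos θ : ℝ) : ℂ) + ((b 1 * t * Real.sin θ : ℝ) : ℂ) * Complex.I := by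
    rw [hzdef, mul_comm Complex.I, Complex.exp_mul_I]
    push_cast
    ring
  have hA2 : A ^ 2 = (b 0 + b 1 * t * Real.cos θ) ^ 2 + (b 1 * t * Real.sin θ) ^ 2 := by
    rw [hAdef, hwre, Complex.sq_norm, Complex.normSq_add_mul_I]
  have hcos : Real.cos θ ≤ Real.cos θ₀ := by
    rw [← Real.cos_abs θ]
    exact Real.cos_le_cos_of_nonneg_of_le_pi hθ₀.le hθb hθa
  have key : (b 0 + b 1 * t * Real.cos θ) ^ 2 + (b 1 * t * Real.sin θ) ^ 2
      = (b 0 + b 1 * t) ^ 2 - 2 * b 0 * b 1 * t * (1 - Real.cos θ) := by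
    linear_combination (b 1 * t) ^ 2 * Real.sin_sq_add_cos_sq θ
  have hA2le : A ^ 2 ≤ (b 0 + b 1 * t) ^ 2 - 2 * b 0 * b 1 * t * s := by
    rw [hA2, key, hsdef]
    nlinarith [mul_le_mul_of_nonneg_left hcos
      (by positivity : (0:ℝ) ≤ 2 * b 0 * b 1 * t)]
  have hA0 : 0 ≤ A := norm_nonneg _
  have hB0 : 0 < b 0 + b 1 * t := by positivity
  have hABpos : 0 < A + (b 0 + b 1 * t) := by linarith
  have hts : 0 < 2 * b 0 * b 1 * t * s :=
    mul_pos (mul_pos (mul_pos (mul_pos two_pos h0) h1) ht0) hs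
  have hAB : A ≤ b 0 + b 1 * t := by
    nlinarith [hA2le, hABpos, hts]
  have hhead : δ * t ≤ (b 0 + b 1 * t) - A := by
    rw [hδdef, div_mul_eq_mul_div, div_le_iff₀ (by linarith : (0:ℝ) < b 0 + b 1)]
    have h2' : A + (b 0 + b 1 * t) ≤ 2 * (b 0 + b 1) := by nlinarith [mul_le_mul_of_nonneg_left ht1 h1.le]
    nlinarith [mul_le_mul_of_nonneg_left h2' (by linarith : (0:ℝ) ≤ b 0 + b 1 * t - A)]
  -- main estimate
  have hmain : ‖ψC z‖ ≤ ψ t - δ * t := by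
    calc ‖ψC z‖ = ‖((b 0 : ℂ) + (b 1 : ℂ) * z) + ∑' j, (b (j + 2) : ℂ) * z ^ (j + 2)‖ := by
          rw [hsplit]
      _ ≤ A + ‖∑' j, (b (j + 2) : ℂ) * z ^ (j + 2)‖ := norm_add_le _ _
      _ ≤ ((b 0 + b 1 * t) - δ * t) + ∑' j, b (j + 2) * t ^ (j + 2) :=
          add_le_add (by linarith) htb
      _ = ψ t - δ * t := by rw [hψt]; ring
  -- monotonicity and conclusion
  have hψt_le : ψ t ≤ ψ r := by
    rw [hψ, hψ]
    refine Summable.tsum_le_tsum (fun j => ?_) hst hsr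
    exact mul_le_mul_of_nonneg_left (pow_le_pow_left₀ ht0.le htr j) (hnn j)
  have hψt_nonneg : 0 ≤ ψ t := by
    rw [hψ]
    exact tsum_nonneg fun j => mul_nonneg (hnn j) (pow_nonneg ht0.le j)
  have hexp : 1 - c * t ≤ Real.exp (-c * t) := by
    have := Real.add_one_le_exp (-c * t)
    linarith
  calc ‖ψC z‖ ≤ ψ t - δ * t := hmain
    _ = ψ t - (c * ψ r) * t := by rw [hc_eq]
    _ ≤ ψ t - (c * ψ t) * t := by
        have h5 : c * ψ t ≤ c * ψ r := mul_le_mul_of_nonneg_left hψt_le hc_pos.le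
        have h6 : c * ψ t * t ≤ c * ψ r * t := mul_le_mul_of_nonneg_right h5 ht0.le
        linarith
    _ = (1 - c * t) * ψ t := by ring
    _ ≤ Real.exp (-c * t) * ψ t := mul_le_mul_of_nonneg_right hexp hψt_nonneg
end

section
/- Let ψ(z) = Σ_{j≥0} b_j z^j be a power series with nonnegative coefficients and b_1 > 0, and let k ≥ 1 be a fixed integer. Then the k-th coefficient of ψ(z)^n satisfies coeff_[k](ψ^n) ~ C(n,k) b_0^{n−k} b_1^k as n → ∞ (k fixed). -/
open Filter Topology PowerSeries Finset

private noncomputable def Dd (b : ℕ → ℝ) (k n : ℕ) : ℝ :=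
  (n.choose k : ℝ) * b 0 ^ (n - k) * b 1 ^ k

private lemma chooseTendstoAtTop {s : ℕ} (hs : 1 ≤ s) :
    Tendsto (fun m : ℕ => ((m.choose s : ℕ) : ℝ)) atTop atTop := by
  have hlow : ∀ m : ℕ, ((m + 1 - s : ℕ) : ℝ) / (s.factorial : ℝ) ≤ ((m.choose s : ℕ) : ℝ) := by
    intro m
    calc ((m + 1 - s : ℕ) : ℝ) / (s.factorial : ℝ)
        ≤ ((m + 1 - s : ℕ) ^ s : ℝ) / (s.factorial : ℝ) := by
          gcongr
          exact_mod_cast Nat.le_self_pow (by omega) _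
      _ ≤ ((m.choose s : ℕ) : ℝ) := Nat.pow_le_choose s m
  refine tendsto_atTop_mono hlow ?_
  apply Tendsto.atTop_div_const (by positivity)
  apply tendsto_natCast_atTop_atTop.comp
  refine tendsto_atTop_mono (fun m => ?_) (tendsto_sub_atTop_nat s)
  omega

private lemma chooseRatioTendstoZero {a c : ℕ} (hab : a < c) :
    Tendsto (fun n : ℕ => (n.choose a : ℝ) / (n.choose c : ℝ)) atTop (𝓝 0) := by
  have h1 : Tendsto (fun n : ℕ => (((n - a).choose (c - a) : ℕ) : ℝ)) atTop atTop :=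
    (chooseTendstoAtTop (by omega)).comp (tendsto_sub_atTop_nat a)
  have h2 : Tendsto (fun n : ℕ => ((c.choose a : ℝ)) / (((n - a).choose (c - a) : ℕ) : ℝ))
      atTop (𝓝 0) := tendsto_const_nhds.div_atTop h1
  refine h2.congr' ?_
  filter_upwards [eventually_ge_atTop c] with n hn
  have key : n.choose c * c.choose a = n.choose a * (n - a).choose (c - a) :=
    Nat.choose_mul hab.le
  have hb : ((n.choose c : ℕ) : ℝ) ≠ 0 := by
    exact_mod_cast (Nat.choose_pos hn).ne'
  have hd : (((n - a).choose (c - a) : ℕ) : ℝ) ≠ 0 := by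
    exact_mod_cast (Nat.choose_pos (by omega)).ne'
  rw [div_eq_div_iff hd hb]
  have := congrArg (Nat.cast (R := ℝ)) key
  push_cast at this
  linarith [this]

/-- For `ψ(z) = Σ bⱼ zʲ` with nonnegative coefficients, `b₀ > 0` and `b₁ > 0`,
and fixed `k ≥ 1`, the `k`-th coefficient of `ψ(z)^n` satisfies
`coeff_[k](ψⁿ) ~ C(n,k) b₀^{n−k} b₁^k` as `n → ∞`. -/
theorem stmt_12 (b : ℕ → ℝ) (hnn : ∀ j, 0 ≤ b j) (h0 : 0 < b 0) (h1 : 0 < b 1)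
    (k : ℕ) (hk : 1 ≤ k) :
    Filter.Tendsto (fun n : ℕ =>
        (PowerSeries.coeff k ((PowerSeries.mk b) ^ n)) /
          ((n.choose k : ℝ) * b 0 ^ (n - k) * b 1 ^ k)) Filter.atTop (𝓝 1) := by
  clear hk
  induction k using Nat.strong_induction_on with
  | _ k IH => ?_
  rcases k with _ | m
  · -- base case k = 0
    have heq : (fun n : ℕ =>
        (PowerSeries.coeff 0 ((PowerSeries.mk b) ^ n)) /
          ((n.choose 0 : ℝ) * b 0 ^ (n - 0) * b 1 ^ 0)) = fun _ : ℕ => (1 : ℝ) := by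
      funext n
      rw [PowerSeries.coeff_zero_eq_constantCoeff, map_pow, PowerSeries.constantCoeff_mk]
      simp [div_self (pow_ne_zero n h0.ne')]
    rw [heq]
    exact tendsto_const_nhds
  · -- inductive step k = m + 1
    -- the derivative recurrence
    have hrec : ∀ n : ℕ, ((m+1 : ℕ) : ℝ) * PowerSeries.coeff (m+1) ((PowerSeries.mk b) ^ (n+1)) =
        ((n+1 : ℕ) : ℝ) * ∑ p ∈ Finset.HasAntidiagonal.antidiagonal m,
          PowerSeries.coeff p.1 ((PowerSeries.mk b) ^ n) * (b (p.2+1) * ((p.2 : ℝ) + 1)) := by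
      intro n
      have hd := PowerSeries.coeff_derivative ((PowerSeries.mk b) ^ (n+1)) m
      rw [Derivation.leibniz_pow] at hd
      simp only [Nat.add_sub_cancel, smul_eq_mul] at hd
      rw [map_nsmul, nsmul_eq_mul, PowerSeries.coeff_mul] at hd
      simp only [PowerSeries.coeff_derivative, PowerSeries.coeff_mk] at hd
      push_cast at hd ⊢
      linear_combination -hd
    have hb0 : b 0 ≠ 0 := h0.ne'
    have hb1 : b 1 ≠ 0 := h1.ne'
    have hDpos : ∀ k n : ℕ, k ≤ n → 0 < Dd b k n := by
      intro k n h
      have hc : (0 : ℝ) < (n.choose k : ℝ) := by exact_mod_cast Nat.choose_pos h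
      unfold Dd
      positivity
    set T : ℕ × ℕ → ℕ → ℝ := fun p n =>
      ((n : ℝ) * (PowerSeries.coeff p.1 ((PowerSeries.mk b) ^ (n-1)) *
        (b (p.2+1) * ((p.2 : ℝ) + 1)))) / (((m+1 : ℕ) : ℝ) * Dd b (m+1) n) with hT
    have hsum : Tendsto (fun n : ℕ => ∑ p ∈ Finset.HasAntidiagonal.antidiagonal m, T p n) atTop (𝓝 1) := by
      have hone : (1 : ℝ) = ∑ p ∈ Finset.HasAntidiagonal.antidiagonal m,
          (if p.2 = 0 then (1 : ℝ) else 0) := by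
        rw [Finset.sum_eq_single ((m, 0) : ℕ × ℕ)]
        · simp
        · rintro ⟨i, j⟩ hmem hne
          simp only [Finset.HasAntidiagonal.mem_antidiagonal] at hmem
          have hj : j ≠ 0 := by
            rintro rfl
            exact hne (by simp [Prod.ext_iff]; omega)
          simp [hj]
        · intro h
          exact absurd (Finset.HasAntidiagonal.mem_antidiagonal.mpr (by simp)) h
      rw [hone]
      refine tendsto_finset_sum _ ?_
      rintro ⟨i, j⟩ hp
      have hij : i + j = m := Finset.HasAntidiagonal.mem_antidiagonal.mp hp
      by_cases hj : j = 0
      · -- dominant term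
        subst hj
        have him : i = m := by omega
        subst him
        rw [if_pos rfl]
        have base : Tendsto (fun n : ℕ =>
            PowerSeries.coeff i ((PowerSeries.mk b) ^ (n-1)) / Dd b i (n-1)) atTop (𝓝 1) :=
          (IH i (by omega)).comp (tendsto_sub_atTop_nat 1)
        refine base.congr' ?_
        filter_upwards [eventually_ge_atTop (i+1)] with n hn
        have hnat : n * (n - 1).choose i = n.choose (i + 1) * (i + 1) := by
          have h := Nat.add_one_mul_choose_eq (n-1) i
          rwa [Nat.sub_add_cancel (by omega)] at h
        have hnatR : (n : ℝ) * ((n-1).choose i : ℝ)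
            = (n.choose (i+1) : ℝ) * ((i : ℝ) + 1) := by exact_mod_cast hnat
        have hd1 : Dd b i (n-1) ≠ 0 := (hDpos i (n-1) (by omega)).ne'
        have hd2 : ((i+1 : ℕ) : ℝ) * Dd b (i+1) n ≠ 0 :=
          mul_ne_zero (by positivity) (hDpos (i+1) n hn).ne'
        simp only [hT]
        unfold Dd
        unfold Dd at hd1 hd2
        rw [div_eq_div_iff hd1 hd2, show n - 1 - i = n - (i+1) from by omega]
        push_cast
        norm_num
        linear_combination (-(PowerSeries.coeff i ((PowerSeries.mk b) ^ (n-1)) *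
          b 0 ^ (n - (i+1)) * b 1 ^ (i+1))) * hnatR
      · -- negligible terms
        rw [if_neg hj]
        have hi : i < m := by omega
        have base : Tendsto (fun n : ℕ =>
            PowerSeries.coeff i ((PowerSeries.mk b) ^ (n-1)) / Dd b i (n-1)) atTop (𝓝 1) :=
          (IH i (by omega)).comp (tendsto_sub_atTop_nat 1)
        set K : ℝ := (b (j+1) * ((j : ℝ) + 1) * ((i : ℝ) + 1) * (b 0 ^ (m - i) * b 1 ^ i)) /
          (((m+1 : ℕ) : ℝ) * b 1 ^ (m+1)) with hK
        have hg : Tendsto (fun n : ℕ =>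
            K * ((n.choose (i+1) : ℝ) / (n.choose (m+1) : ℝ))) atTop (𝓝 (K * 0)) :=
          tendsto_const_nhds.mul (chooseRatioTendstoZero (by omega))
        have hprod := base.mul hg
        rw [mul_zero, mul_zero] at hprod
        refine hprod.congr' ?_
        filter_upwards [eventually_ge_atTop (m+1)] with n hn
        have hnat : n * (n - 1).choose i = n.choose (i + 1) * (i + 1) := by
          have h := Nat.add_one_mul_choose_eq (n-1) i
          rwa [Nat.sub_add_cancel (by omega)] at h
        have hnatR : (n : ℝ) * ((n-1).choose i : ℝ)
            = (n.choose (i+1) : ℝ) * ((i : ℝ) + 1) := by exact_mod_cast hnat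
        have hd1 : Dd b i (n-1) ≠ 0 := (hDpos i (n-1) (by omega)).ne'
        have hcm : ((n.choose (m+1) : ℕ) : ℝ) ≠ 0 := by
          exact_mod_cast (Nat.choose_pos hn).ne'
        have hpow : b 0 ^ (n - 1 - i) = b 0 ^ (m - i) * b 0 ^ (n - (m+1)) := by
          rw [← pow_add]; congr 1; omega
        have hd2 : ((m+1 : ℕ) : ℝ) * Dd b (m+1) n ≠ 0 :=
          mul_ne_zero (by positivity) (hDpos (m+1) n hn).ne'
        simp only [hT, hK]
        unfold Dd
        unfold Dd at hd1 hd2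
        rw [hpow] at hd1 ⊢
        rw [div_mul_div_comm, div_mul_div_comm,
          div_eq_div_iff (mul_ne_zero hd1 (mul_ne_zero (mul_ne_zero
            (show ((m+1 : ℕ) : ℝ) ≠ 0 by positivity) (pow_ne_zero _ hb1)) hcm)) hd2]
        push_cast
        linear_combination (-(PowerSeries.coeff i ((PowerSeries.mk b) ^ (n-1)) *
          (b (j+1) * ((j : ℝ) + 1)) * ((m : ℝ) + 1) * (n.choose (m+1) : ℝ) *
          b 0 ^ (n - (m+1)) * b 1 ^ (m+1) * b 0 ^ (m - i) * b 1 ^ i)) * hnatR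
    refine hsum.congr' ?_
    filter_upwards [eventually_ge_atTop (m+1)] with n hn
    have hrecn := hrec (n-1)
    rw [Nat.sub_add_cancel (by omega : 1 ≤ n)] at hrecn
    have hDn : ((n.choose (m+1) : ℝ) * b 0 ^ (n - (m+1)) * b 1 ^ (m+1)) ≠ 0 := by
      have := hDpos (m+1) n hn
      unfold Dd at this
      exact this.ne'
    have hMD : ((m+1 : ℕ) : ℝ) * Dd b (m+1) n ≠ 0 :=
      mul_ne_zero (by positivity) (hDpos (m+1) n hn).ne'
    simp only [hT]
    rw [← Finset.sum_div, ← Finset.mul_sum, div_eq_div_iff hMD hDn]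
    unfold Dd
    push_cast at hrecn ⊢
    linear_combination (-((n.choose (m+1) : ℝ) * b 0 ^ (n - (m+1)) * b 1 ^ (m+1))) * hrecn
end

section
/- Let f be a nonconstant power series with nonnegative coefficients, f(0) > 0, radius of convergence R > 0, and Khinchin family (X_t). Suppose f is Gaussian, i.e., the normalized variables X̂_t = (X_t − m(t))/σ(t) converge in distribution to the standard normal as t ↑ R. Then M_f = lim_{t↑R} m(t) = +∞. -/
open Filter Topology
open scoped ENNReal

noncomputable def ee (r : ℝ) : ℂ := Complex.exp (Complex.I * r)

lemma ee_norm (r : ℝ) : ‖ee r‖ = 1 := by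
  rw [ee, Complex.norm_exp]
  simp

lemma ee_add (r s : ℝ) : ee (r + s) = ee r * ee s := by
  rw [ee, ee, ee, ← Complex.exp_add]
  congr 1
  push_cast
  ring

lemma ee_conj (r : ℝ) : (starRingEnd ℂ) (ee r) = ee (-r) := by
  rw [ee, ← Complex.exp_conj]
  congr 1
  simp

lemma ee_zero : ee 0 = 1 := by simp [ee]

open Finset in
lemma key_ineq (P : ℕ → ℝ) (hP : ∀ n, 0 ≤ P n) (hPs : Summable P) (F : ℝ) (hF : 0 < F)
    (x : ℕ → ℝ) (χθ : ℝ → ℂ)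
    (hχ : ∀ θ : ℝ, χθ θ = (∑' n, (P n : ℂ) * ee (θ * x n)) / (F : ℂ))
    (N K : ℕ) (h : ℝ) :
    (N : ℝ)^2 * P K / F ≤
      ∑ k ∈ range N, ∑ k' ∈ range N, ‖χθ (((k : ℝ) - (k' : ℝ)) * h)‖ := by
  have hc : ∀ n : ℕ, ∃ cn : ℝ, cn = h * (x n - x K) := fun n => ⟨_, rfl⟩
  let c : ℕ → ℝ := fun n => h * (x n - x K)
  let D : ℕ → ℂ := fun n => ∑ k ∈ range N, ee ((k : ℝ) * c n)
  have hDnorm : ∀ n, ‖D n‖ ≤ N := by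
    intro n
    refine le_trans (norm_sum_le _ _) ?_
    have : ∀ k ∈ range N, ‖ee ((k : ℝ) * c n)‖ = 1 := fun k _ => ee_norm _
    rw [Finset.sum_congr rfl this]
    simp
  have hterm_nonneg : ∀ n, 0 ≤ P n * Complex.normSq (D n) := fun n =>
    mul_nonneg (hP n) (Complex.normSq_nonneg _)
  have hDsq : ∀ n, Complex.normSq (D n) ≤ (N:ℝ)^2 := by
    intro n
    rw [Complex.normSq_eq_norm_sq]
    have h0 := norm_nonneg (D n)
    nlinarith [hDnorm n]
  have hSsum : Summable (fun n => P n * Complex.normSq (D n)) := by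
    refine Summable.of_nonneg_of_le hterm_nonneg (fun n => ?_) (hPs.mul_right ((N:ℝ)^2))
    exact mul_le_mul_of_nonneg_left (hDsq n) (hP n)
  have hSnonneg : (0:ℝ) ≤ ∑' n, P n * Complex.normSq (D n) := tsum_nonneg hterm_nonneg
  have hDK : D K = (N : ℂ) := by
    have hcK : c K = 0 := by simp [c]
    simp [D, hcK, ee_zero]
  have hlow : (N:ℝ)^2 * P K ≤ ∑' n, P n * Complex.normSq (D n) := by
    have h1 := Summable.le_tsum hSsum K (fun j _ => hterm_nonneg j)
    rw [hDK] at h1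
    calc (N:ℝ)^2 * P K = P K * Complex.normSq (N:ℂ) := by
          rw [Complex.normSq_natCast]; ring
    _ ≤ _ := h1
  -- identity for each term
  have hterm : ∀ k k' : ℕ,
      χθ (((k : ℝ) - (k' : ℝ)) * h) * ee (-((((k : ℝ) - (k' : ℝ)) * h) * x K))
      = (∑' n, (P n : ℂ) * (ee ((k:ℝ) * c n) * ee (-((k':ℝ) * c n)))) / F := by
    intro k k'
    rw [hχ, div_mul_eq_mul_div, ← tsum_mul_right]
    congr 1
    refine tsum_congr fun n => ?_
    rw [mul_assoc, ← ee_add, ← ee_add]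
    congr 2
    show ((k:ℝ) - k') * h * x n + -((((k:ℝ) - k') * h) * x K)
        = (k:ℝ) * (h * (x n - x K)) + -((k':ℝ) * (h * (x n - x K)))
    ring
  have hsummable : ∀ k k' : ℕ,
      Summable (fun n => (P n : ℂ) * (ee ((k:ℝ) * c n) * ee (-((k':ℝ) * c n)))) := by
    intro k k'
    apply Summable.of_norm
    simp only [norm_mul, ee_norm, mul_one, Complex.norm_real, Real.norm_eq_abs]
    have heq : (fun n => |P n|) = P := funext fun n => abs_of_nonneg (hP n)
    rw [heq]
    exact hPs
  -- Fejér sum identity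
  have hswap : ∀ k ∈ range N,
      ∑ k' ∈ range N, ∑' n, (P n : ℂ) * (ee ((k:ℝ) * c n) * ee (-((k':ℝ) * c n)))
      = ∑' n, ∑ k' ∈ range N, (P n : ℂ) * (ee ((k:ℝ) * c n) * ee (-((k':ℝ) * c n))) := by
    intro k _
    exact (Summable.tsum_finsetSum (fun k' _ => hsummable k k')).symm
  have hinner : ∀ n, ∑ k ∈ range N, ∑ k' ∈ range N,
      (P n : ℂ) * (ee ((k:ℝ) * c n) * ee (-((k':ℝ) * c n)))
      = ((P n * Complex.normSq (D n) : ℝ) : ℂ) := by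
    intro n
    have h1 : ∀ k ∈ range N, ∑ k' ∈ range N,
        (P n : ℂ) * (ee ((k:ℝ) * c n) * ee (-((k':ℝ) * c n)))
        = (P n : ℂ) * (ee ((k:ℝ) * c n) * ∑ k' ∈ range N, ee (-((k':ℝ) * c n))) := by
      intro k _
      simp [Finset.mul_sum]
    rw [Finset.sum_congr rfl h1, ← Finset.mul_sum, ← Finset.sum_mul]
    have h2 : ∑ k' ∈ range N, ee (-((k':ℝ) * c n)) = (starRingEnd ℂ) (D n) := by
      rw [map_sum]
      exact Finset.sum_congr rfl fun k' _ => (ee_conj _).symm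
    rw [h2]
    show (P n : ℂ) * (D n * (starRingEnd ℂ) (D n)) = _
    rw [Complex.mul_conj]
    push_cast
    ring
  have hsummable2 : ∀ k ∈ range N, Summable
      (fun n => ∑ k' ∈ range N, (P n : ℂ) * (ee ((k:ℝ) * c n) * ee (-((k':ℝ) * c n)))) := by
    intro k _
    exact summable_sum fun k' _ => hsummable k k'
  have hAid : (∑ k ∈ range N, ∑ k' ∈ range N,
        χθ (((k : ℝ) - (k' : ℝ)) * h) * ee (-((((k : ℝ) - (k' : ℝ)) * h) * x K)))
      = (((∑' n, P n * Complex.normSq (D n)) / F : ℝ) : ℂ) := by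
    calc ∑ k ∈ range N, ∑ k' ∈ range N,
          χθ (((k : ℝ) - (k' : ℝ)) * h) * ee (-((((k : ℝ) - (k' : ℝ)) * h) * x K))
        = ∑ k ∈ range N, ∑ k' ∈ range N,
          (∑' n, (P n : ℂ) * (ee ((k:ℝ) * c n) * ee (-((k':ℝ) * c n)))) / F := by
          exact Finset.sum_congr rfl fun k _ => Finset.sum_congr rfl fun k' _ => hterm k k'
      _ = (∑ k ∈ range N, ∑ k' ∈ range N,
          ∑' n, (P n : ℂ) * (ee ((k:ℝ) * c n) * ee (-((k':ℝ) * c n)))) / F := by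
          simp only [← Finset.sum_div]
      _ = (∑' n, ∑ k ∈ range N, ∑ k' ∈ range N,
          (P n : ℂ) * (ee ((k:ℝ) * c n) * ee (-((k':ℝ) * c n)))) / F := by
          congr 1
          rw [Finset.sum_congr rfl hswap]
          exact (Summable.tsum_finsetSum hsummable2).symm
      _ = (∑' n, ((P n * Complex.normSq (D n) : ℝ) : ℂ)) / F := by
          congr 1
          exact tsum_congr hinner
      _ = (((∑' n, P n * Complex.normSq (D n)) / F : ℝ) : ℂ) := by
          rw [← Complex.ofReal_tsum, Complex.ofReal_div]
  -- final chain
  have hnormA : ‖(∑ k ∈ range N, ∑ k' ∈ range N,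
        χθ (((k : ℝ) - (k' : ℝ)) * h) * ee (-((((k : ℝ) - (k' : ℝ)) * h) * x K)))‖
      = (∑' n, P n * Complex.normSq (D n)) / F := by
    rw [hAid, Complex.norm_real, Real.norm_eq_abs, abs_of_nonneg (div_nonneg hSnonneg hF.le)]
  have hA_le : ‖(∑ k ∈ range N, ∑ k' ∈ range N,
        χθ (((k : ℝ) - (k' : ℝ)) * h) * ee (-((((k : ℝ) - (k' : ℝ)) * h) * x K)))‖
      ≤ ∑ k ∈ range N, ∑ k' ∈ range N, ‖χθ (((k : ℝ) - (k' : ℝ)) * h)‖ := by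
    refine le_trans (norm_sum_le _ _) (Finset.sum_le_sum fun k _ => ?_)
    refine le_trans (norm_sum_le _ _) (Finset.sum_le_sum fun k' _ => ?_)
    rw [norm_mul, ee_norm, mul_one]
  calc (N : ℝ)^2 * P K / F ≤ (∑' n, P n * Complex.normSq (D n)) / F :=
        (div_le_div_iff_of_pos_right hF).mpr hlow
    _ ≤ _ := by rw [← hnormA]; exact hA_le

lemma aux_summable (a : ℕ → ℝ) (hnn : ∀ n, 0 ≤ a n) {t t' : ℝ} (ht : 0 ≤ t) (htt' : t < t')
    (hs : Summable (fun n : ℕ => a n * t' ^ n)) : Summable (fun n : ℕ => (n : ℝ) * a n * t ^ n) := by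
  have ht' : 0 < t' := lt_of_le_of_lt ht htt'
  have hq0 : 0 ≤ t / t' := div_nonneg ht ht'.le
  have hq1 : t / t' < 1 := (div_lt_one ht').mpr htt'
  set M : ℝ := ∑' n : ℕ, a n * t' ^ n with hM
  have hb : ∀ n, a n * t' ^ n ≤ M := fun n =>
    Summable.le_tsum hs n (fun j _ => mul_nonneg (hnn j) (pow_nonneg ht'.le j))
  have hgeo : Summable (fun n : ℕ => M * ((n : ℝ) ^ 1 * (t / t') ^ n)) :=
    (summable_pow_mul_geometric_of_norm_lt_one 1
      (by rwa [Real.norm_eq_abs, abs_of_nonneg hq0])).mul_left M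
  have hM0 : 0 ≤ M := tsum_nonneg fun n => mul_nonneg (hnn n) (pow_nonneg ht'.le n)
  refine hgeo.of_nonneg_of_le (fun n => ?_) (fun n => ?_)
  · exact mul_nonneg (mul_nonneg (Nat.cast_nonneg n) (hnn n)) (pow_nonneg ht n)
  · have htn : t ^ n = t' ^ n * (t / t') ^ n := by
      rw [div_pow, mul_div_assoc', mul_div_cancel_left₀ _ (pow_ne_zero n ht'.ne')]
    calc (n : ℝ) * a n * t ^ n = (a n * t' ^ n) * ((n : ℝ) * (t / t') ^ n) := by
          rw [htn]; ring
      _ ≤ M * ((n : ℝ) ^ 1 * (t / t') ^ n) := by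
          rw [pow_one]
          exact mul_le_mul_of_nonneg_right (hb n)
            (mul_nonneg (Nat.cast_nonneg n) (pow_nonneg hq0 n))

set_option maxHeartbeats 1000000 in
/-- If `f ∈ K` is Gaussian, i.e. the characteristic functions of the normalized
Khinchin variables `X̂_t = (X_t − m(t))/σ(t)` converge pointwise to `e^{−θ²/2}`
as `t ↑ R`, then `M_f = lim_{t ↑ R} m(t) = +∞`. -/
theorem stmt_19 (a : ℕ → ℝ) (R : ℝ≥0∞) (hR : 0 < R)
    (hnn : ∀ n, 0 ≤ a n) (h0 : 0 < a 0) (hnc : ∃ n, 1 ≤ n ∧ a n ≠ 0)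
    (hrad : ∀ x : ℝ, 0 < x →
      (ENNReal.ofReal x < R → Summable (fun n => a n * x ^ n)) ∧
      (R < ENNReal.ofReal x → ¬ Summable (fun n => a n * x ^ n)))
    (f : ℝ → ℝ) (hf : ∀ x, f x = ∑' n, a n * x ^ n)
    (m : ℝ → ℝ) (hm : ∀ t, m t = (∑' n : ℕ, (n : ℝ) * a n * t ^ n) / f t)
    (σ : ℝ → ℝ)
    (hσ : ∀ t, σ t = Real.sqrt ((∑' n : ℕ, (n : ℝ) ^ 2 * a n * t ^ n) / f t - m t ^ 2))
    (χ : ℝ → ℝ → ℂ)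
    (hχ : ∀ t θ, χ t θ = (∑' n : ℕ, ((a n * t ^ n : ℝ) : ℂ) *
        Complex.exp (Complex.I * θ * (((n : ℝ) - m t) / σ t))) / ((f t : ℝ) : ℂ))
    (l : Filter ℝ)
    (hl : l = if R = ⊤ then Filter.atTop else nhdsWithin R.toReal (Set.Iio R.toReal))
    (hgauss : ∀ θ : ℝ,
      Filter.Tendsto (fun t => χ t θ) l (𝓝 ((Real.exp (-θ ^ 2 / 2) : ℝ) : ℂ))) :
    Filter.Tendsto m l Filter.atTop := by
  rw [tendsto_atTop]
  intro b
  by_contra hev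
  rw [Filter.not_eventually] at hev
  set C : ℝ := max b 1 with hCdef
  have hC1 : (1 : ℝ) ≤ C := le_max_right _ _
  have hfreq : ∃ᶠ t in l, m t < C :=
    hev.mono fun t ht => lt_of_lt_of_le (lt_of_not_ge ht) (le_max_left _ _)
  -- eventually t is in (0, R)
  have hgood : ∀ᶠ t in l, 0 < t ∧ ENNReal.ofReal t < R := by
    rw [hl]
    split_ifs with hTop
    · filter_upwards [eventually_gt_atTop (0:ℝ)] with t ht
      exact ⟨ht, by rw [hTop]; exact ENNReal.ofReal_lt_top⟩
    · have hr : 0 < R.toReal := ENNReal.toReal_pos hR.ne' hTop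
      have hmem : Set.Ioo (R.toReal/2) R.toReal ∈ nhdsWithin R.toReal (Set.Iio R.toReal) :=
        Ioo_mem_nhdsLT_of_mem ⟨half_lt_self hr, le_refl _⟩
      filter_upwards [hmem] with t ht
      refine ⟨lt_trans (half_pos hr) ht.1, ?_⟩
      rw [← ENNReal.ofReal_toReal hTop]
      exact (ENNReal.ofReal_lt_ofReal_iff hr).mpr ht.2
  -- constants
  set N₀ : ℕ := ⌈2*C⌉₊ with hN₀def
  have hN₀ : 2*C ≤ (N₀ : ℝ) := Nat.le_ceil _
  have hN₀1 : (1:ℝ) ≤ (N₀:ℝ) := by linarith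
  have hN₀ne : N₀ ≠ 0 := by
    intro hc; rw [hc] at hN₀1; norm_num at hN₀1
  set N : ℕ := 2*N₀ + 2 with hNdef
  have hNR : (N : ℝ) = 2*(N₀:ℝ) + 2 := by push_cast [hNdef]; ring
  have hN1 : (1:ℝ) ≤ (N:ℝ) := by rw [hNR]; linarith
  have hNpos : (0:ℝ) < 2*(N:ℝ)^2 := by nlinarith
  set h : ℝ := Real.sqrt (2 * Real.log (2*(N:ℝ)^2)) with hhdef
  have hlog0 : 0 ≤ 2 * Real.log (2*(N:ℝ)^2) := by
    have : (1:ℝ) ≤ 2*(N:ℝ)^2 := by nlinarith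
    have := Real.log_nonneg this
    linarith
  have hh2 : h^2 = 2 * Real.log (2*(N:ℝ)^2) := Real.sq_sqrt hlog0
  have hexph : Real.exp (-h^2/2) = 1/(2*(N:ℝ)^2) := by
    rw [hh2, show -(2 * Real.log (2*(N:ℝ)^2))/2 = -Real.log (2*(N:ℝ)^2) by ring,
      Real.exp_neg, Real.exp_log hNpos, one_div]
  -- the limit of the Fejér sums
  set L : ℝ := ∑ k ∈ Finset.range N, ∑ k' ∈ Finset.range N,
      Real.exp (-(((k:ℝ) - (k':ℝ))*h)^2/2) with hLdef
  have hLbound : L ≤ (N:ℝ) + 1/2 := by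
    have hterm : ∀ k ∈ Finset.range N, ∀ k' ∈ Finset.range N,
        Real.exp (-(((k:ℝ) - (k':ℝ))*h)^2/2)
          ≤ (if k = k' then (1:ℝ) else 0) + 1/(2*(N:ℝ)^2) := by
      intro k _ k' _
      by_cases hkk : k = k'
      · subst hkk
        simp only [sub_self, zero_mul, if_pos rfl]
        norm_num
        try positivity
      · have hne : ((k:ℤ) - (k':ℤ)) ≠ 0 := by
          intro hc
          exact hkk (by omega)
        have habs : (1:ℤ) ≤ |(k:ℤ) - (k':ℤ)| := Int.one_le_abs hne
        have habsR : (1:ℝ) ≤ |(k:ℝ) - (k':ℝ)| := by exact_mod_cast habs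
        have hsq : (1:ℝ) ≤ ((k:ℝ) - (k':ℝ))^2 := by nlinarith [abs_nonneg ((k:ℝ) - (k':ℝ)), sq_abs ((k:ℝ) - (k':ℝ))]
        have hexp_le : Real.exp (-(((k:ℝ) - (k':ℝ))*h)^2/2) ≤ Real.exp (-h^2/2) := by
          apply Real.exp_le_exp.mpr
          have h2 : h^2 ≤ (((k:ℝ) - (k':ℝ))*h)^2 := by
            rw [mul_pow]
            nlinarith [sq_nonneg h]
          linarith
        rw [if_neg hkk]
        rw [hexph] at hexp_le
        linarith
    have hsum_le := Finset.sum_le_sum fun k hk =>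
      Finset.sum_le_sum (hterm k hk)
    rw [hLdef]
    refine le_trans hsum_le ?_
    have hline : ∀ k ∈ Finset.range N,
        ∑ k' ∈ Finset.range N, ((if k = k' then (1:ℝ) else 0) + 1/(2*(N:ℝ)^2))
        = 1 + (N:ℝ)/(2*(N:ℝ)^2) := by
      intro k hk
      rw [Finset.sum_add_distrib, Finset.sum_ite_eq, if_pos hk, Finset.sum_const,
        Finset.card_range, nsmul_eq_mul, mul_one_div]
    rw [Finset.sum_congr rfl hline, Finset.sum_const, Finset.card_range, nsmul_eq_mul]
    have hNne : (N:ℝ) ≠ 0 := by linarith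
    have : (N:ℝ)/(2*(N:ℝ)^2) = 1/(2*(N:ℝ)) := by
      field_simp
    rw [this]
    have heq : (N:ℝ) * (1 + 1/(2*(N:ℝ))) = (N:ℝ) + 1/2 := by
      field_simp
    rw [heq]
  -- convergence of the norm sums
  have htends : Filter.Tendsto (fun t => ∑ k ∈ Finset.range N, ∑ k' ∈ Finset.range N,
      ‖χ t (((k:ℝ) - (k':ℝ))*h)‖) l (𝓝 L) := by
    rw [hLdef]
    refine tendsto_finset_sum _ fun k _ => tendsto_finset_sum _ fun k' _ => ?_
    have hg := (hgauss (((k:ℝ) - (k':ℝ))*h)).norm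
    simpa only [Complex.norm_real, Real.norm_eq_abs,
      abs_of_nonneg (Real.exp_pos _).le] using hg
  have hup : ∀ᶠ t in l, ∑ k ∈ Finset.range N, ∑ k' ∈ Finset.range N,
      ‖χ t (((k:ℝ) - (k':ℝ))*h)‖ < (N:ℝ) + 2 :=
    htends.eventually_lt_const (by linarith)
  obtain ⟨t, hmtC, ⟨ht0, htR⟩, hsumlt⟩ := (hfreq.and_eventually (hgood.and hup)).exists
  -- basic facts at t
  have hsum : Summable (fun n => a n * t ^ n) := (hrad t ht0).1 htR
  have hterm_nn : ∀ n : ℕ, 0 ≤ a n * t ^ n := fun n =>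
    mul_nonneg (hnn n) (pow_nonneg ht0.le n)
  have hFpos : 0 < f t := by
    rw [hf t]
    have h1 : a 0 * t ^ 0 ≤ ∑' n, a n * t ^ n := Summable.le_tsum hsum 0 fun j _ => hterm_nn j
    simpa using lt_of_lt_of_le h0 (by simpa using h1)
  -- a larger radius point
  obtain ⟨r', hr1, hr2⟩ := exists_between htR
  have hr'top : r' ≠ ⊤ := ne_top_of_lt hr2
  have htt' : t < r'.toReal := (ENNReal.ofReal_lt_iff_lt_toReal ht0.le hr'top).mp hr1
  have hsum' : Summable (fun n : ℕ => a n * r'.toReal ^ n) :=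
    (hrad r'.toReal (ht0.trans htt')).1 (by rwa [ENNReal.ofReal_toReal hr'top])
  have hs1 : Summable (fun n : ℕ => (n:ℝ) * a n * t ^ n) :=
    aux_summable a hnn ht0.le htt' hsum'
  have hs1_nn : ∀ n : ℕ, 0 ≤ (n:ℝ) * a n * t ^ n := fun n =>
    mul_nonneg (mul_nonneg (Nat.cast_nonneg n) (hnn n)) (pow_nonneg ht0.le n)
  -- m t < C  gives  S1 < C * f t
  have hS1C : (∑' n : ℕ, (n:ℝ) * a n * t ^ n) < C * f t := by
    have hmt := hm t
    rw [hmt] at hmtC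
    exact (div_lt_iff₀ hFpos).mp hmtC
  -- Markov: the head of the series carries at least half the mass
  have htail0 : Summable (fun i : ℕ => a (i+N₀) * t ^ (i+N₀)) :=
    (summable_nat_add_iff N₀).mpr hsum
  have htail1 : Summable (fun i : ℕ => ((i+N₀ : ℕ):ℝ) * a (i+N₀) * t ^ (i+N₀)) :=
    (summable_nat_add_iff (f := fun n : ℕ => (n:ℝ) * a n * t ^ n) N₀).mpr hs1
  have hkey : ∑ i ∈ Finset.range N₀, a i * t ^ i + (∑' i : ℕ, a (i+N₀) * t ^ (i+N₀)) = f t := by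
    rw [hf t]; exact Summable.sum_add_tsum_nat_add N₀ hsum
  have hN₀T0 : (N₀:ℝ) * (∑' i : ℕ, a (i+N₀) * t ^ (i+N₀)) ≤ ∑' n : ℕ, (n:ℝ) * a n * t ^ n := by
    have h1 : (N₀:ℝ) * (∑' i : ℕ, a (i+N₀) * t ^ (i+N₀))
        = ∑' i : ℕ, (N₀:ℝ) * (a (i+N₀) * t ^ (i+N₀)) := tsum_mul_left.symm
    have h2 : (∑' i : ℕ, (N₀:ℝ) * (a (i+N₀) * t ^ (i+N₀)))
        ≤ ∑' i : ℕ, ((i+N₀ : ℕ):ℝ) * a (i+N₀) * t ^ (i+N₀) := by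
      refine Summable.tsum_le_tsum (fun i => ?_) (htail0.mul_left _) htail1
      have hcast : (N₀:ℝ) ≤ ((i+N₀ : ℕ):ℝ) := by exact_mod_cast Nat.le_add_left N₀ i
      have hpos := hterm_nn (i+N₀)
      nlinarith
    have h3 : (∑' i : ℕ, ((i+N₀ : ℕ):ℝ) * a (i+N₀) * t ^ (i+N₀))
        ≤ ∑' n : ℕ, (n:ℝ) * a n * t ^ n := by
      have h4 := Summable.sum_add_tsum_nat_add (f := fun n : ℕ => (n:ℝ) * a n * t ^ n) N₀ hs1
      have h5 : (0:ℝ) ≤ ∑ i ∈ Finset.range N₀, (i:ℝ) * a i * t ^ i :=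
        Finset.sum_nonneg fun i _ => hs1_nn i
      linarith
    rw [h1]
    exact h2.trans h3
  have hhalf : f t / 2 ≤ ∑ i ∈ Finset.range N₀, a i * t ^ i := by
    have hT0nn : (0:ℝ) ≤ ∑' i : ℕ, a (i+N₀) * t ^ (i+N₀) :=
      tsum_nonneg fun i => hterm_nn (i+N₀)
    have hN₀pos : (0:ℝ) < (N₀:ℝ) := by linarith
    have hC2 : C ≤ (N₀:ℝ)/2 := by linarith
    have hT0le : (∑' i : ℕ, a (i+N₀) * t ^ (i+N₀)) ≤ f t / 2 := by
      have h6 : (N₀:ℝ) * (∑' i : ℕ, a (i+N₀) * t ^ (i+N₀)) ≤ ((N₀:ℝ)/2) * f t := by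
        have : C * f t ≤ ((N₀:ℝ)/2) * f t :=
          mul_le_mul_of_nonneg_right hC2 hFpos.le
        linarith [hN₀T0, hS1C]
      nlinarith
    linarith
  have hK : ∃ K ∈ Finset.range N₀, f t/(2*(N₀:ℝ)) ≤ a K * t ^ K := by
    apply Finset.exists_le_of_sum_le (Finset.nonempty_range_iff.mpr hN₀ne)
    rw [Finset.sum_const, Finset.card_range, nsmul_eq_mul]
    calc (N₀:ℝ) * (f t/(2*(N₀:ℝ))) = f t / 2 := by
          field_simp
      _ ≤ _ := hhalf
  obtain ⟨K, _, hKge⟩ := hK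
  -- apply the key inequality
  have hχ' : ∀ θ : ℝ, χ t θ = (∑' n : ℕ, ((a n * t ^ n : ℝ) : ℂ) *
      ee (θ * (((n:ℝ) - m t) / σ t))) / ((f t : ℝ) : ℂ) := by
    intro θ
    rw [hχ t θ]
    congr 1
    refine tsum_congr fun n => ?_
    congr 1
    rw [ee]
    congr 1
    push_cast
    ring
  have hKI := key_ineq (fun n => a n * t ^ n) hterm_nn hsum (f t) hFpos
    (fun n => ((n:ℝ) - m t) / σ t) (χ t) hχ' N K h
  -- lower bound on the LHS of hKI
  have hNN : (0:ℝ) < (N:ℝ)^2 := by nlinarith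
  have hlow2 : (N:ℝ)^2 * (f t/(2*(N₀:ℝ))) / f t ≤ (N:ℝ)^2 * (a K * t ^ K) / f t := by
    have hmul := mul_le_mul_of_nonneg_left hKge (le_of_lt hNN)
    exact (div_le_div_iff_of_pos_right hFpos).mpr hmul
  have hsimp : (N:ℝ)^2 * (f t/(2*(N₀:ℝ))) / f t = (N:ℝ)^2/(2*(N₀:ℝ)) := by
    have hN₀pos : (0:ℝ) < (N₀:ℝ) := by linarith
    field_simp
  have hfinal : (N:ℝ) + 2 ≤ (N:ℝ)^2/(2*(N₀:ℝ)) := by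
    have hN₀pos : (0:ℝ) < 2*(N₀:ℝ) := by linarith
    rw [le_div_iff₀ hN₀pos, hNR]
    nlinarith
  rw [hsimp] at hlow2
  have hchain := hfinal.trans (hlow2.trans hKI)
  linarith
end
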